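/- The second homotopy move across two components preserves the pairing: if P₁ contains letters A, B with |B| = τ(|A|) forming the pattern ...AB...BA... where the first pair AB lies in component m and the second pair BA in component n (m < n), and P₂ is obtained by deleting A and B, then (w_m, w_n)_{P₁} = (w_m, w_n)_{P₂}; more generally (w_i, w_j)_{P₁} = (w_i, w_j)_{P₂} for all i < j. -/

import Mathlib

/-! Nanophrases over a set `α` (with involution `τ`) in the sense of Turaev,
with letters drawn from a type `L`.  A phrase is encoded as a single list with
`none` acting as the separator `|` between components; thus the homotopy moves
may modify subwords spanning several components. -/

/-- A nanophrase over `α` with letters in `L`: a projection `L → α` and a word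
with separators (`none`) dividing the components. -/
structure NPhrase (α : Type*) (L : Type*) where
  proj : L → α
  word : List (Option L)

namespace NPhrase

/-- The components of a separator-encoded phrase word. -/
def comps {L : Type*} : List (Option L) → List (List L)
  | [] => [[]]
  | none :: l => [] :: comps l
  | some a :: l =>
      match comps l with
      | [] => [[a]]
      | c :: cs => (a :: c) :: cs

/-- Re-encode a list of components as a separator-encoded phrase word. -/
def ofComps {L : Type*} (cs : List (List L)) : List (Option L) :=
  List.intercalate [none] (cs.map (fun c => c.map some))

/-- The letters of a phrase word (separators removed). -/
def letters {L : Type*} (w : List (Option L)) : List L := w.filterMap id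

/-- The Gauss condition: every letter occurs exactly twice or not at all. -/
def IsGauss {α L : Type*} [DecidableEq L] (P : NPhrase α L) : Prop :=
  ∀ x : L, (letters P.word).count x = 0 ∨ (letters P.word).count x = 2

/-- A list consisting only of separators. -/
def Seps {L : Type*} (s : List (Option L)) : Prop := ∀ x ∈ s, x = none

/-- Isomorphism of nanophrases: a bijective relabelling of the letters which
preserves the projections on the letters actually occurring. -/
def Isomorphic {α L : Type*} (P Q : NPhrase α L) : Prop :=
  ∃ e : L ≃ L, (∀ x ∈ letters P.word, Q.proj (e x) = P.proj x) ∧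
    Q.word = P.word.map (Option.map e)

/-- One elementary step of homotopy of nanophrases: an isomorphism or one of the
three homotopy moves (the modified subwords may span several components, i.e.
separators may occur between the displayed consecutive letters). -/
inductive Step {α L : Type*} (τ : α → α) : NPhrase α L → NPhrase α L → Prop
  | iso (g g' : L → α) (w : List (Option L)) (e : L ≃ L)
      (hg : ∀ x ∈ letters w, g' (e x) = g x) :
      Step τ ⟨g, w⟩ ⟨g', w.map (Option.map e)⟩
  | move1 (g : L → α) (A : L) (x s y : List (Option L)) (hs : Seps s) :
      Step τ ⟨g, x ++ [some A] ++ s ++ [some A] ++ y⟩ ⟨g, x ++ s ++ y⟩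
  | move2 (g : L → α) (A B : L) (x s₁ y s₂ z : List (Option L))
      (hs₁ : Seps s₁) (hs₂ : Seps s₂) (hAB : g B = τ (g A)) :
      Step τ ⟨g, x ++ [some A] ++ s₁ ++ [some B] ++ y ++ [some B] ++ s₂ ++ [some A] ++ z⟩
             ⟨g, x ++ s₁ ++ y ++ s₂ ++ z⟩
  | move3 (g : L → α) (A B C : L) (x s₁ y s₂ z s₃ t : List (Option L))
      (hs₁ : Seps s₁) (hs₂ : Seps s₂) (hs₃ : Seps s₃)
      (hAB : g A = g B) (hBC : g B = g C) :
      Step τ ⟨g, x ++ [some A] ++ s₁ ++ [some B] ++ y ++ [some A] ++ s₂ ++ [some C] ++ z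
                  ++ [some B] ++ s₃ ++ [some C] ++ t⟩
             ⟨g, x ++ [some B] ++ s₁ ++ [some A] ++ y ++ [some C] ++ s₂ ++ [some A] ++ z
                  ++ [some C] ++ s₃ ++ [some B] ++ t⟩

/-- Homotopy of nanophrases (with the diagonal homotopy data): the equivalence
relation generated by isomorphisms and the three homotopy moves. -/
def Homotopic {α L : Type*} (τ : α → α) : NPhrase α L → NPhrase α L → Prop :=
  Relation.EqvGen (Step τ)

/-- Relations for the group `Π = ⟨ z_a (a ∈ α) ∣ z_a z_{τ(a)} = 1 ⟩`. -/
def gRels {α : Type*} (τ : α → α) : Set (FreeGroup α) :=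
  {r | ∃ a : α, r = FreeGroup.of a * FreeGroup.of (τ a)}

/-- Relations for the abelian group `π = ⟨ a ∈ α ∣ a·τ(a) = 1, ab = ba ⟩`. -/
def piRels {α : Type*} (τ : α → α) : Set (FreeGroup α) :=
  {r | (∃ a : α, r = FreeGroup.of a * FreeGroup.of (τ a)) ∨
    ∃ a b : α, r = FreeGroup.of a * FreeGroup.of b * (FreeGroup.of a)⁻¹ * (FreeGroup.of b)⁻¹}

/-- The value of `γ` on one component (a word), given the list `pre` of letters
of the phrase read before it: the ordered product of `z_{|X|}` at a first
occurrence and `z_{τ(|X|)}` at a second occurrence. -/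
def gammaWord {α L : Type*} [DecidableEq L] (τ : α → α) (g : L → α) :
    List L → List L → PresentedGroup (gRels τ)
  | _, [] => 1
  | pre, n :: l =>
      (if n ∈ pre then PresentedGroup.of (τ (g n)) else PresentedGroup.of (g n)) *
        gammaWord τ g (pre ++ [n]) l

/-- The `i`-th coordinate (0-indexed) of the invariant `γ` of a nanophrase. -/
def gammaCoord {α L : Type*} [DecidableEq L] (τ : α → α) (P : NPhrase α L) (i : ℕ) :
    PresentedGroup (gRels τ) :=
  gammaWord τ P.proj (((comps P.word).take i).flatten) ((comps P.word).getD i [])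

/-- The pairing `(w_i, w_j)_P ∈ π`: the product of `|X|` over the letters `X`
occurring both in the `i`-th and in the `j`-th component (0-indexed). -/
def pairing {α L : Type*} [DecidableEq L] (τ : α → α) (P : NPhrase α L) (i j : ℕ) :
    PresentedGroup (piRels τ) :=
  ((((comps P.word).getD i []).filter (fun x => x ∈ (comps P.word).getD j [])).map
    (fun x => PresentedGroup.of (P.proj x))).prod

/-- Merge the `l`-th and `(l+1)`-st components of a list of components. -/
def mergeAt {L : Type*} (l : ℕ) (cs : List (List L)) : List (List L) :=
  cs.take l ++ [cs.getD l [] ++ cs.getD (l + 1) []] ++ cs.drop (l + 2)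

/-- The nanophrase `P_a^{1,1;p,q}` of length `k` (0-indexed components): the
letter `0` with `|0| = a` in components `p` and `q`, all other components empty. -/
def stdPair {α : Type*} (k p q : ℕ) (a : α) : NPhrase α ℕ :=
  ⟨fun _ => a, ofComps ((List.range k).map fun i => if i = p ∨ i = q then [0] else [])⟩

/-- The nanoword `w_{a,b} = ABAB` with `|A| = a`, `|B| = b`, viewed as a
nanophrase of length 1. -/
def wab {α : Type*} (a b : α) : NPhrase α ℕ :=
  ⟨fun n => if n = 0 then a else b, [some 0, some 1, some 0, some 1]⟩

/-- The desingularization of an étale word `w`: each letter `A` of multiplicity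
`m` is replaced, at its `i`-th occurrence (1-indexed), by
`A_{1,i} A_{2,i} ⋯ A_{i-1,i} A_{i,i+1} ⋯ A_{i,m}`, where `A_{i,j}` is encoded
as `(A, i, j)`; letters of multiplicity 1 disappear. -/
def desing {L : Type*} [DecidableEq L] (w : List L) : List (L × ℕ × ℕ) :=
  (w.zipIdx.map Prod.swap).flatMap fun pA =>
    let A := pA.2
    let i := (w.take (pA.1 + 1)).count A
    let m := w.count A
    ((List.range (i - 1)).map fun t => (A, t + 1, i)) ++
      ((List.range (m - i)).map fun t => (A, i, i + 1 + t))

/-- Two étale words over `α` are homotopic if their desingularizations are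
homotopic nanowords (nanophrases of length 1). -/
def EtaleHomotopic {α L : Type*} [DecidableEq L] (τ : α → α)
    (g₁ : L → α) (w₁ : List L) (g₂ : L → α) (w₂ : List L) : Prop :=
  Homotopic τ (⟨fun t => g₁ t.1, (desing w₁).map some⟩ : NPhrase α (L × ℕ × ℕ))
    ⟨fun t => g₂ t.1, (desing w₂).map some⟩

end NPhrase

section Aux

open NPhrase

theorem comps_ne_nil {L : Type*} (w : List (Option L)) : comps w ≠ [] := by
  induction w with
  | nil => simp [comps]
  | cons a l ih =>
    cases a with
    | none => simp [comps]
    | some a =>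
      obtain ⟨c, cs, h⟩ := List.exists_cons_of_ne_nil ih
      simp [comps, h]

theorem letters_eq_flatten {L : Type*} (w : List (Option L)) :
    letters w = (comps w).flatten := by
  induction w with
  | nil => simp [comps, letters]
  | cons a l ih =>
    cases a with
    | none => simpa [comps, letters, List.filterMap_cons] using ih
    | some a =>
      obtain ⟨c, cs, h⟩ := List.exists_cons_of_ne_nil (comps_ne_nil l)
      simp only [letters, List.filterMap_cons, comps, h] at *
      simp [ih]
      exact ih

theorem not_mem_getD {L : Type*} {l : List (List L)} {x : L}
    (h : x ∉ l.flatten) (k : ℕ) : x ∉ l.getD k [] := by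
  by_cases hk : k < l.length
  · intro hx
    exact h (List.mem_flatten.2 ⟨l.getD k [], by
      rw [List.getD_eq_getElem l [] hk]; exact List.getElem_mem _, hx⟩)
  · rw [List.getD_eq_default _ _ (le_of_not_gt hk)]
    simp

theorem getD5_left {L : Type*} (cs₁ cs₂ cs₃ : List (List L)) (c d : List L) {i : ℕ}
    (h : i < cs₁.length) :
    (cs₁ ++ [c] ++ cs₂ ++ [d] ++ cs₃).getD i [] = cs₁.getD i [] := by
  rw [List.getD_append _ _ _ _ (by simp only [List.length_append, List.length_cons, List.length_nil]; omega),
    List.getD_append _ _ _ _ (by simp only [List.length_append, List.length_cons, List.length_nil]; omega),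
    List.getD_append _ _ _ _ (by simp only [List.length_append, List.length_cons, List.length_nil]; omega),
    List.getD_append _ _ _ _ h]

theorem getD5_m {L : Type*} (cs₁ cs₂ cs₃ : List (List L)) (c d : List L) :
    (cs₁ ++ [c] ++ cs₂ ++ [d] ++ cs₃).getD cs₁.length [] = c := by
  rw [List.getD_append _ _ _ _ (by simp only [List.length_append, List.length_cons, List.length_nil]; omega),
    List.getD_append _ _ _ _ (by simp only [List.length_append, List.length_cons, List.length_nil]; omega),
    List.getD_append _ _ _ _ (by simp only [List.length_append, List.length_cons, List.length_nil]; omega),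
    List.getD_append_right _ _ _ _ (le_refl _)]
  simp

theorem getD5_mid {L : Type*} (cs₁ cs₂ cs₃ : List (List L)) (c d : List L) {i : ℕ}
    (h1 : cs₁.length < i) (h2 : i < cs₁.length + 1 + cs₂.length) :
    (cs₁ ++ [c] ++ cs₂ ++ [d] ++ cs₃).getD i [] = cs₂.getD (i - cs₁.length - 1) [] := by
  rw [List.getD_append _ _ _ _ (by simp only [List.length_append, List.length_cons, List.length_nil]; omega),
    List.getD_append _ _ _ _ (by simp only [List.length_append, List.length_cons, List.length_nil]; omega),
    List.getD_append_right _ _ _ _ (by simp only [List.length_append, List.length_cons, List.length_nil]; omega)]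
  congr 1
  simp only [List.length_append, List.length_cons, List.length_nil]; omega

theorem getD5_n {L : Type*} (cs₁ cs₂ cs₃ : List (List L)) (c d : List L) :
    (cs₁ ++ [c] ++ cs₂ ++ [d] ++ cs₃).getD (cs₁.length + 1 + cs₂.length) [] = d := by
  rw [List.getD_append _ _ _ _ (by simp only [List.length_append, List.length_cons, List.length_nil]; omega),
    List.getD_append_right _ _ _ _ (by simp only [List.length_append, List.length_cons, List.length_nil]; omega)]
  have h0 : cs₁.length + 1 + cs₂.length - ((cs₁ ++ [c]) ++ cs₂).length = 0 := by
    simp only [List.length_append, List.length_cons, List.length_nil]; omega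
  rw [h0]
  rfl

theorem getD5_right {L : Type*} (cs₁ cs₂ cs₃ : List (List L)) (c d : List L) {i : ℕ}
    (h : cs₁.length + 1 + cs₂.length < i) :
    (cs₁ ++ [c] ++ cs₂ ++ [d] ++ cs₃).getD i []
      = cs₃.getD (i - (cs₁.length + 2 + cs₂.length)) [] := by
  rw [List.getD_append_right _ _ _ _ (by simp only [List.length_append, List.length_cons, List.length_nil]; omega)]
  congr 1
  simp only [List.length_append, List.length_cons, List.length_nil]; omega

theorem getD5_congr {L : Type*} (cs₁ cs₂ cs₃ : List (List L)) (c c' d d' : List L) {i : ℕ}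
    (h1 : i ≠ cs₁.length) (h2 : i ≠ cs₁.length + 1 + cs₂.length) :
    (cs₁ ++ [c] ++ cs₂ ++ [d] ++ cs₃).getD i []
      = (cs₁ ++ [c'] ++ cs₂ ++ [d'] ++ cs₃).getD i [] := by
  rcases lt_trichotomy i cs₁.length with h | h | h
  · rw [getD5_left _ _ _ _ _ h, getD5_left _ _ _ _ _ h]
  · omega
  rcases lt_trichotomy i (cs₁.length + 1 + cs₂.length) with h' | h' | h'
  · rw [getD5_mid _ _ _ _ _ h h', getD5_mid _ _ _ _ _ h h']
  · omega
  · rw [getD5_right _ _ _ _ _ h', getD5_right _ _ _ _ _ h']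

theorem of_mul_of_tau {α : Type*} (τ : α → α) (a : α) :
    (PresentedGroup.of a : PresentedGroup (piRels τ)) * PresentedGroup.of (τ a) = 1 := by
  have h : FreeGroup.of a * FreeGroup.of (τ a) ∈ Subgroup.normalClosure (piRels τ) :=
    Subgroup.subset_normalClosure (Or.inl ⟨a, rfl⟩)
  exact (QuotientGroup.eq_one_iff _).2 h

theorem filter_pair_nil {L : Type*} [DecidableEq L] {x y : L} {l : List L}
    (hx : x ∉ l) (hy : y ∉ l) : [x, y].filter (fun z => z ∈ l) = [] := by
  simp [List.filter_cons, hx, hy]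

end Aux

open NPhrase in
/-- the second homotopy move across two components, deleting
letters `A, B` with `|B| = τ(|A|)` forming `AB` in component `m` and `BA` in
component `n` (`m < n`), preserves the pairing `(w_i, w_j)` for all `i < j`
(in particular for `(i, j) = (m, n)`). -/
theorem pairing_move2 {α : Type*} [Fintype α] (τ : α → α)
    (hτ : Function.Involutive τ) (P₁ P₂ : NPhrase α ℕ)
    (hG₁ : P₁.IsGauss) (A B : ℕ) (cs₁ cs₂ cs₃ : List (List ℕ))
    (u u' v v' : List ℕ) (hproj : P₁.proj = P₂.proj)
    (hAB : P₁.proj B = τ (P₁.proj A))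
    (h₁ : comps P₁.word = cs₁ ++ [u ++ [A, B] ++ u'] ++ cs₂ ++ [v ++ [B, A] ++ v'] ++ cs₃)
    (h₂ : comps P₂.word = cs₁ ++ [u ++ u'] ++ cs₂ ++ [v ++ v'] ++ cs₃) :
    (pairing τ P₁ cs₁.length (cs₁.length + 1 + cs₂.length)
        = pairing τ P₂ cs₁.length (cs₁.length + 1 + cs₂.length)) ∧
      ∀ i j, i < j → pairing τ P₁ i j = pairing τ P₂ i j := by
  set m := cs₁.length with hm
  set n := cs₁.length + 1 + cs₂.length with hn
  set g := P₁.proj with hg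
  -- letters of P₁
  have hlet : letters P₁.word
      = cs₁.flatten ++ (u ++ [A, B] ++ u') ++ cs₂.flatten ++ (v ++ [B, A] ++ v')
        ++ cs₃.flatten := by
    rw [letters_eq_flatten, h₁]
    simp
  have hBA : B ≠ A := by
    intro hba
    rcases hG₁ A with h | h <;>
    · rw [hlet, hba] at h
      simp only [List.count_append, List.count_cons, List.count_nil, beq_iff_eq,
        eq_self_iff_true, if_true, ite_true] at h
      omega
  -- A occurs exactly once in each of the two displayed pairs and nowhere else
  have hcA : (letters P₁.word).count A = 2 := by
    rcases hG₁ A with h | h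
    · rw [hlet] at h; simp [List.count_append, List.count_cons] at h
    · exact h
  have hcB : (letters P₁.word).count B = 2 := by
    rcases hG₁ B with h | h
    · rw [hlet] at h
      simp [List.count_append, List.count_cons, hBA] at h
    · exact h
  have hAB' : A ≠ B := fun h => hBA h.symm
  rw [hlet] at hcA hcB
  simp only [List.count_append, List.count_cons, List.count_nil, beq_iff_eq, hBA, hAB',
    eq_self_iff_true, if_true, if_false, ite_true, ite_false] at hcA hcB
  have hA1 : A ∉ cs₁.flatten := List.count_eq_zero.1 (by omega)
  have hA2 : A ∉ cs₂.flatten := List.count_eq_zero.1 (by omega)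
  have hA3 : A ∉ cs₃.flatten := List.count_eq_zero.1 (by omega)
  have hAu : A ∉ u := List.count_eq_zero.1 (by omega)
  have hAu' : A ∉ u' := List.count_eq_zero.1 (by omega)
  have hAv : A ∉ v := List.count_eq_zero.1 (by omega)
  have hAv' : A ∉ v' := List.count_eq_zero.1 (by omega)
  have hB1 : B ∉ cs₁.flatten := List.count_eq_zero.1 (by omega)
  have hB2 : B ∉ cs₂.flatten := List.count_eq_zero.1 (by omega)
  have hB3 : B ∉ cs₃.flatten := List.count_eq_zero.1 (by omega)
  have hBu : B ∉ u := List.count_eq_zero.1 (by omega)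
  have hBu' : B ∉ u' := List.count_eq_zero.1 (by omega)
  have hBv : B ∉ v := List.count_eq_zero.1 (by omega)
  have hBv' : B ∉ v' := List.count_eq_zero.1 (by omega)
  -- A and B do not occur in any component other than m and n
  have hnotmem : ∀ (c d : List ℕ) (k : ℕ), k ≠ m → k ≠ n →
      A ∉ (cs₁ ++ [c] ++ cs₂ ++ [d] ++ cs₃).getD k [] ∧
      B ∉ (cs₁ ++ [c] ++ cs₂ ++ [d] ++ cs₃).getD k [] := by
    intro c d k hk1 hk2
    rcases lt_trichotomy k m with h | h | h
    · rw [getD5_left _ _ _ _ _ h]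
      exact ⟨not_mem_getD hA1 k, not_mem_getD hB1 k⟩
    · omega
    rcases lt_trichotomy k n with h' | h' | h'
    · rw [getD5_mid _ _ _ _ _ h h']
      exact ⟨not_mem_getD hA2 _, not_mem_getD hB2 _⟩
    · omega
    · rw [getD5_right _ _ _ _ _ h']
      exact ⟨not_mem_getD hA3 _, not_mem_getD hB3 _⟩
  have hfAB : (PresentedGroup.of (g A) : PresentedGroup (piRels τ))
      * PresentedGroup.of (g B) = 1 := by
    rw [hAB]; exact of_mul_of_tau τ (g A)
  have main : ∀ i j, i < j → pairing τ P₁ i j = pairing τ P₂ i j := by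
    intro i j hij
    unfold pairing
    rw [h₁, h₂, ← hproj, ← hg]
    by_cases him : i = m
    · subst him
      rw [getD5_m, getD5_m]
      by_cases hjn : j = n
      · -- i = m, j = n : the interesting case
        subst hjn
        rw [getD5_n, getD5_n]
        have hu : u.filter (fun x => x ∈ v ++ [B, A] ++ v')
            = u.filter (fun x => x ∈ v ++ v') := by
          refine List.filter_congr fun x hx => ?_
          have h1 : x ≠ A := fun h => hAu (h ▸ hx)
          have h2 : x ≠ B := fun h => hBu (h ▸ hx)
          simp [List.mem_append, h1, h2]
        have hu' : u'.filter (fun x => x ∈ v ++ [B, A] ++ v')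
            = u'.filter (fun x => x ∈ v ++ v') := by
          refine List.filter_congr fun x hx => ?_
          have h1 : x ≠ A := fun h => hAu' (h ▸ hx)
          have h2 : x ≠ B := fun h => hBu' (h ▸ hx)
          simp [List.mem_append, h1, h2]
        have hAmem : A ∈ v ++ [B, A] ++ v' := by simp
        have hBmem : B ∈ v ++ [B, A] ++ v' := by simp
        rw [List.filter_append, List.filter_append, List.filter_append, hu, hu']
        rw [show [A, B].filter (fun x => x ∈ v ++ [B, A] ++ v') = [A, B] by
          simp [List.filter_cons, hAmem, hBmem]]
        simp only [List.map_append, List.prod_append, List.map_cons, List.map_nil,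
          List.prod_cons, List.prod_nil, mul_one]
        rw [hfAB, mul_one]
      · -- i = m, j ≠ n : A, B not in component j
        have hjm : j ≠ m := by omega
        obtain ⟨hAj, hBj⟩ := hnotmem (u ++ [A, B] ++ u') (v ++ [B, A] ++ v') j hjm hjn
        rw [getD5_congr cs₁ cs₂ cs₃ (u ++ [A, B] ++ u') (u ++ u') (v ++ [B, A] ++ v')
          (v ++ v') hjm hjn]
        congr 2
        rw [List.filter_append, List.filter_append, List.filter_append]
        rw [getD5_congr cs₁ cs₂ cs₃ (u ++ [A, B] ++ u') (u ++ u') (v ++ [B, A] ++ v')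
          (v ++ v') hjm hjn] at hAj hBj
        rw [filter_pair_nil hAj hBj]
        simp
    · by_cases hin : i = n
      · -- i = n, j > n
        subst hin
        have hjm : j ≠ m := by omega
        have hjn : j ≠ n := by omega
        obtain ⟨hAj, hBj⟩ := hnotmem (u ++ [A, B] ++ u') (v ++ [B, A] ++ v') j hjm hjn
        rw [getD5_n, getD5_n]
        rw [getD5_congr cs₁ cs₂ cs₃ (u ++ [A, B] ++ u') (u ++ u') (v ++ [B, A] ++ v')
          (v ++ v') hjm hjn]
        congr 2
        rw [List.filter_append, List.filter_append, List.filter_append]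
        rw [getD5_congr cs₁ cs₂ cs₃ (u ++ [A, B] ++ u') (u ++ u') (v ++ [B, A] ++ v')
          (v ++ v') hjm hjn] at hAj hBj
        rw [filter_pair_nil hBj hAj]
        simp
      · -- i ≠ m, n : component i is unchanged
        rw [getD5_congr cs₁ cs₂ cs₃ (u ++ [A, B] ++ u') (u ++ u') (v ++ [B, A] ++ v')
          (v ++ v') him hin]
        obtain ⟨hAi, hBi⟩ := hnotmem (u ++ u') (v ++ v') i him hin
        by_cases hjm : j = m
        · subst hjm
          rw [getD5_m, getD5_m]
          congr 2
          refine List.filter_congr fun x hx => ?_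
          have h1 : x ≠ A := fun h => hAi (h ▸ hx)
          have h2 : x ≠ B := fun h => hBi (h ▸ hx)
          simp [List.mem_append, h1, h2]
        · by_cases hjn : j = n
          · subst hjn
            rw [getD5_n, getD5_n]
            congr 2
            refine List.filter_congr fun x hx => ?_
            have h1 : x ≠ A := fun h => hAi (h ▸ hx)
            have h2 : x ≠ B := fun h => hBi (h ▸ hx)
            simp [List.mem_append, h1, h2]
          · rw [getD5_congr cs₁ cs₂ cs₃ (u ++ [A, B] ++ u') (u ++ u')
              (v ++ [B, A] ++ v') (v ++ v') hjm hjn]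
  exact ⟨main m n (by omega), main⟩
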